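/- Let ρ be a nonempty finite string and z a finite string over a linearly ordered alphabet. For every natural number i, the strings ρ^i ++ z and ρ^{i+1} ++ z are distinct, and ρ^i ++ z <lex ρ^{i+1} ++ z if and only if z <lex ρ ++ z. Consequently, the sequence (ρ^i ++ z) for i = 0, 1, 2, … is strictly increasing in lexicographic order if z <lex ρ ++ z, and strictly decreasing otherwise. -/

import Mathlib

/-- The `i`-fold concatenation `ρ^i`. -/
def lpow {α : Type*} (ρ : List α) (i : ℕ) : List α :=
  (List.replicate i ρ).flatten

private lemma lex_append_left_iff {α : Type*} [LinearOrder α] (l s t : List α) :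
    List.Lex (· < ·) (l ++ s) (l ++ t) ↔ List.Lex (· < ·) s t := by
  induction l with
  | nil => simp
  | cons a l ih => simpa [List.lex_cons_iff] using ih

private lemma lpow_succ {α : Type*} (ρ : List α) (i : ℕ) :
    lpow ρ (i + 1) = lpow ρ i ++ ρ := by
  induction i with
  | zero => simp [lpow]
  | succ n ih =>
      simp only [lpow, List.replicate_succ, List.flatten_cons] at *
      rw [List.append_assoc, ih]

private lemma lpow_length {α : Type*} (ρ : List α) (i : ℕ) :
    (lpow ρ i).length = i * ρ.length := by
  simp [lpow, Nat.mul_comm]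

/-- For nonempty `ρ` and any `z`: for each `i`, `ρ^i ++ z ≠ ρ^{i+1} ++ z`, and
    `ρ^i ++ z <lex ρ^{i+1} ++ z ↔ z <lex ρ ++ z`. Consequently, the sequence
    `(ρ^i ++ z)_i` is strictly increasing in lexicographic order if
    `z <lex ρ ++ z`, and strictly decreasing otherwise. -/
theorem lpow_append_lex_mono {α : Type*} [LinearOrder α] (ρ z : List α)
    (hρ : ρ ≠ []) :
    (∀ i : ℕ, lpow ρ i ++ z ≠ lpow ρ (i + 1) ++ z ∧
      (List.Lex (· < ·) (lpow ρ i ++ z) (lpow ρ (i + 1) ++ z) ↔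
        List.Lex (· < ·) z (ρ ++ z))) ∧
    (List.Lex (· < ·) z (ρ ++ z) →
      ∀ i j : ℕ, i < j → List.Lex (· < ·) (lpow ρ i ++ z) (lpow ρ j ++ z)) ∧
    (¬ List.Lex (· < ·) z (ρ ++ z) →
      ∀ i j : ℕ, i < j → List.Lex (· < ·) (lpow ρ j ++ z) (lpow ρ i ++ z)) := by
  have hlen : ρ.length ≠ 0 := fun h => hρ (List.length_eq_zero_iff.mp h)
  have hne : ∀ i, lpow ρ i ++ z ≠ lpow ρ (i + 1) ++ z := by
    intro i h
    have := congrArg List.length h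
    simp only [List.length_append, lpow_length, Nat.succ_mul] at this
    omega
  have key : ∀ i, List.Lex (· < ·) (lpow ρ i ++ z) (lpow ρ (i + 1) ++ z) ↔
      List.Lex (· < ·) z (ρ ++ z) := by
    intro i
    rw [lpow_succ, List.append_assoc, lex_append_left_iff]
  have step_dec : ∀ i, ¬ List.Lex (· < ·) z (ρ ++ z) →
      List.Lex (· < ·) (lpow ρ (i + 1) ++ z) (lpow ρ i ++ z) := by
    intro i h
    rw [lpow_succ, List.append_assoc, lex_append_left_iff]
    rcases trichotomous_of (List.Lex ((· < ·) : α → α → Prop))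
        (ρ ++ z) z with h1 | h1 | h1
    · exact h1
    · exact absurd (by simpa using congrArg List.length h1) hρ
    · exact absurd h1 h
  refine ⟨fun i => ⟨hne i, key i⟩, ?_, ?_⟩
  · intro h i j hij
    induction j with
    | zero => omega
    | succ n ih =>
        rcases Nat.lt_or_ge i n with h' | h'
        · exact List.lex_trans lt_trans (ih h') ((key n).mpr h)
        · have : i = n := by omega
          subst this
          exact (key i).mpr h
  · intro h i j hij
    induction j with
    | zero => omega
    | succ n ih =>
        rcases Nat.lt_or_ge i n with h' | h'
        · exact List.lex_trans lt_trans (step_dec n h) (ih h')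
        · have : i = n := by omega
          subst this
          exact step_dec i h
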